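/- arXiv:1410.6021 — 14 statements merged into one kernel-verified Lean document; each statement's English description precedes it below -/
import Mathlib

section
/- Let V be a type, m : ℕ, and σ : Fin m → (V → V) the input maps of a homogeneous network, and let ~ be an equivalence relation on V. Then the following are equivalent: (i) for every response function f : (Fin m → ℝ) → ℝ, the network map γ[σ,f] preserves the synchrony space Syn(~, ℝ), i.e. for every x : V → ℝ with (∀ v w, v ~ w → x v = x w) one has ∀ v w, v ~ w → γ[σ,f] x v = γ[σ,f] x w; (ii) the relation ~ is balanced, i.e. for every j : Fin m and all v w : V, v ~ w implies σ j v ~ σ j w. -/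
/-- The network map of a homogeneous network with input maps `σ` and response
function `f`. -/
def networkMap {V E : Type*} {m : ℕ} (σ : Fin m → V → V)
    (f : (Fin m → E) → E) (x : V → E) : V → E :=
  fun v => f (fun j => x (σ j v))

/-- For a homogeneous network with input maps `σ : Fin m → (V → V)` and an
equivalence relation `~` on `V`, the synchrony space `Syn(~, ℝ)` is robustly
invariant (i.e. preserved by the network map for every response function
`f : (Fin m → ℝ) → ℝ`) if and only if `~` is balanced. -/
theorem robust_synchrony_iff_balanced {V : Type*} {m : ℕ}
    (σ : Fin m → V → V) (r : V → V → Prop) (hr : Equivalence r) :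
    (∀ f : (Fin m → ℝ) → ℝ, ∀ x : V → ℝ, (∀ v w, r v w → x v = x w) →
        ∀ v w, r v w → networkMap σ f x v = networkMap σ f x w)
    ↔ (∀ (j : Fin m) (v w : V), r v w → r (σ j v) (σ j w)) := by
  classical
  constructor
  · intro h j v w hvw
    by_contra hc
    set x : V → ℝ := fun u => if r (σ j v) u then 1 else 0 with hx
    have hsync : ∀ a b, r a b → x a = x b := by
      intro a b hab
      simp only [hx]
      by_cases h1 : r (σ j v) a
      · rw [if_pos h1, if_pos (hr.trans h1 hab)]
      · rw [if_neg h1, if_neg (fun h2 => h1 (hr.trans h2 (hr.symm hab)))]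
    have := h (fun u => u j) x hsync v w hvw
    simp only [networkMap, hx] at this
    rw [if_pos (hr.refl _), if_neg hc] at this
    exact one_ne_zero this
  · intro h f x hsync v w hvw
    simp only [networkMap]
    congr 1
    funext j
    exact hsync _ _ (h j v w hvw)
end

section
/- Let V₁, V₂ be types with input maps σ¹ : Fin m → (V₁ → V₁) and σ² : Fin m → (V₂ → V₂), and let φ : V₁ → V₂ be a graph fibration, i.e. φ ∘ σ¹ j = σ² j ∘ φ for every j : Fin m. Then for every type E, every response function f : (Fin m → E) → E, and every y : V₂ → E, the pullback conjugates the network maps: γ[σ¹,f] (y ∘ φ) = (γ[σ²,f] y) ∘ φ. Moreover, every x : V₁ → E in the range of the pullback φ* (i.e. x = y ∘ φ for some y) satisfies x v = x w whenever φ v = φ w. -/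
/-- If `φ : V₁ → V₂` is a graph fibration between homogeneous networks
(`φ ∘ σ1 j = σ2 j ∘ φ` for all `j`), then for every state space `E`, every
response function `f` and every state `y : V₂ → E`, the pullback `φ* y = y ∘ φ`
conjugates the network maps: `γ[σ1,f] (y ∘ φ) = (γ[σ2,f] y) ∘ φ`.  Moreover,
every state in the range of the pullback is synchronous on the fibres of `φ`. -/
theorem fibration_conjugates_dynamics {V₁ V₂ : Type*} {m : ℕ}
    (σ1 : Fin m → V₁ → V₁) (σ2 : Fin m → V₂ → V₂) (φ : V₁ → V₂)
    (hφ : ∀ j : Fin m, φ ∘ σ1 j = σ2 j ∘ φ) :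
    (∀ (E : Type*) (f : (Fin m → E) → E) (y : V₂ → E),
        networkMap σ1 f (y ∘ φ) = (networkMap σ2 f y) ∘ φ) ∧
    (∀ (E : Type*) (x : V₁ → E), (∃ y : V₂ → E, x = y ∘ φ) →
        ∀ v w : V₁, φ v = φ w → x v = x w) := by
  constructor
  · intro E f y
    funext v
    simp only [networkMap, Function.comp_apply]
    congr 1
    funext j
    have := congrFun (hφ j) v
    simp only [Function.comp_apply] at this
    rw [this]
  · rintro E x ⟨y, rfl⟩ v w h
    simp [h]
end

section
/- Let (V₁, A₁, s₁, t₁, κ₁) and (V₂, A₂, s₂, t₂, κ₂) be homogeneous network graphs of valency m with induced input maps σ¹ and σ², and let φV : V₁ → V₂ be a map of vertices. Then there exists a map of arrows φA : A₁ → A₂ preserving colour, source and target (κ₂ ∘ φA = κ₁, s₂ ∘ φA = φV ∘ s₁, t₂ ∘ φA = φV ∘ t₁) if and only if φV intertwines the input maps, i.e. φV ∘ σ¹ j = σ² j ∘ φV for every j : Fin m. Moreover, any such pair (φV, φA) automatically has the graph-fibration property: for every vertex v₁ : V₁ and every arrow a₂ : A₂ with t₂ a₂ = φV v₁, there is a unique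 arrow a₁ : A₁ with t₁ a₁ = v₁ and φA a₁ = a₂. -/
/-- For homogeneous network graphs `(V₁, A₁, s₁, t₁, κ₁)` and
`(V₂, A₂, s₂, t₂, κ₂)` of valency `m` (each vertex receives exactly one arrow
of each colour) with induced input maps `σ1` and `σ2`, a vertex map
`φV : V₁ → V₂` extends to a colour/source/target preserving arrow map
`φA : A₁ → A₂` if and only if `φV` intertwines the input maps; moreover, any
such pair `(φV, φA)` automatically satisfies the graph-fibration lifting
property: arrows targeting `φV v₁` lift uniquely to arrows targeting `v₁`. -/
theorem graph_fibration_iff_intertwines {V₁ A₁ V₂ A₂ : Type*} {m : ℕ}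
    (s₁ t₁ : A₁ → V₁) (κ₁ : A₁ → Fin m)
    (s₂ t₂ : A₂ → V₂) (κ₂ : A₂ → Fin m)
    (h₁ : ∀ (v : V₁) (j : Fin m), ∃! a : A₁, t₁ a = v ∧ κ₁ a = j)
    (h₂ : ∀ (v : V₂) (j : Fin m), ∃! a : A₂, t₂ a = v ∧ κ₂ a = j)
    (σ1 : Fin m → V₁ → V₁) (σ2 : Fin m → V₂ → V₂)
    (hσ1 : ∀ (j : Fin m) (v : V₁) (a : A₁), t₁ a = v → κ₁ a = j → s₁ a = σ1 j v)
    (hσ2 : ∀ (j : Fin m) (v : V₂) (a : A₂), t₂ a = v → κ₂ a = j → s₂ a = σ2 j v)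
    (φV : V₁ → V₂) :
    ((∃ φA : A₁ → A₂,
        κ₂ ∘ φA = κ₁ ∧ s₂ ∘ φA = φV ∘ s₁ ∧ t₂ ∘ φA = φV ∘ t₁) ↔
      (∀ j : Fin m, φV ∘ σ1 j = σ2 j ∘ φV)) ∧
    (∀ φA : A₁ → A₂,
        κ₂ ∘ φA = κ₁ → s₂ ∘ φA = φV ∘ s₁ → t₂ ∘ φA = φV ∘ t₁ →
        ∀ (v₁ : V₁) (a₂ : A₂), t₂ a₂ = φV v₁ →
          ∃! a₁ : A₁, t₁ a₁ = v₁ ∧ φA a₁ = a₂) := by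
  constructor
  · constructor
    · rintro ⟨φA, hκ, hs, ht⟩ j
      funext v
      obtain ⟨a, ⟨hat, haκ⟩, -⟩ := h₁ v j
      have h1 : s₁ a = σ1 j v := hσ1 j v a hat haκ
      have h2 : s₂ (φA a) = σ2 j (φV v) := by
        apply hσ2
        · have := congrFun ht a; simp_all [Function.comp]
        · have := congrFun hκ a; simp_all [Function.comp]
      have h3 : s₂ (φA a) = φV (s₁ a) := congrFun hs a
      simp only [Function.comp]
      rw [← h1, ← h3, h2]
    · intro hint
      refine ⟨fun a => (h₂ (φV (t₁ a)) (κ₁ a)).choose, ?_, ?_, ?_⟩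
      · funext a
        exact (h₂ (φV (t₁ a)) (κ₁ a)).choose_spec.1.2
      · funext a
        have hc := (h₂ (φV (t₁ a)) (κ₁ a)).choose_spec.1
        have h2 : s₂ ((h₂ (φV (t₁ a)) (κ₁ a)).choose) = σ2 (κ₁ a) (φV (t₁ a)) :=
          hσ2 _ _ _ hc.1 hc.2
        have h1 : s₁ a = σ1 (κ₁ a) (t₁ a) := hσ1 _ _ _ rfl rfl
        have := congrFun (hint (κ₁ a)) (t₁ a)
        simp only [Function.comp] at this ⊢
        rw [h2, ← this, h1]
      · funext a
        exact (h₂ (φV (t₁ a)) (κ₁ a)).choose_spec.1.1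
  · intro φA hκ hs ht v₁ a₂ ha₂
    obtain ⟨a₁, ⟨hat, haκ⟩, huniq⟩ := h₁ v₁ (κ₂ a₂)
    refine ⟨a₁, ⟨hat, ?_⟩, ?_⟩
    · obtain ⟨b, hb, hbu⟩ := h₂ (φV v₁) (κ₂ a₂)
      have e1 : φA a₁ = b := by
        apply hbu
        constructor
        · have := congrFun ht a₁; simp_all [Function.comp]
        · have := congrFun hκ a₁; simp_all [Function.comp]
      have e2 : a₂ = b := hbu a₂ ⟨ha₂, rfl⟩
      rw [e1, e2]
    · rintro b ⟨hbt, hba⟩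
      apply huniq
      refine ⟨hbt, ?_⟩
      have := congrFun hκ b
      simp only [Function.comp] at this
      rw [← this, hba]
end

section
/- Let σ : Fin m → (V → V) be the input maps of a homogeneous network, Σ_N the submonoid of Function.End V generated by {σ j | j : Fin m}, and σ̃ j the input maps of the fundamental network. Then for every cell v : V, the evaluation map φ_v : ↥Σ_N → V, φ_v τ = τ v, is a graph fibration from the fundamental network to the original network: σ j (φ_v τ) = φ_v (σ̃ j τ) for all j : Fin m and τ ∈ Σ_N; consequently the pullback conjugates the dynamics: for every type E, every response function f : (Fin m → E) → E and every x : V → E, one has γ̃[f] (x ∘ φ_v) = (γ[σ,f] x) ∘ φ_v. -/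
/-- The monoid `Σ_N` of the homogeneous network: the submonoid of
`Function.End V` generated by the input maps. -/
def SigmaN {V : Type*} {m : ℕ} (σ : Fin m → V → V) : Submonoid (Function.End V) :=
  Submonoid.closure (Set.range fun j => (σ j : Function.End V))

/-- The generating input maps belong to `Σ_N`. -/
theorem sigma_mem_SigmaN {V : Type*} {m : ℕ} (σ : Fin m → V → V) (j : Fin m) :
    (σ j : Function.End V) ∈ SigmaN σ :=
  Submonoid.subset_closure ⟨j, rfl⟩

/-- The input maps of the fundamental network: left composition with the
generators. -/
def σtilde {V : Type*} {m : ℕ} (σ : Fin m → V → V) (j : Fin m)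
    (τ : SigmaN σ) : SigmaN σ :=
  ⟨(show Function.End V from σ j) * τ.1, mul_mem (sigma_mem_SigmaN σ j) τ.2⟩

/-- The fundamental network map with response function `f`. -/
def γtilde {V E : Type*} {m : ℕ} (σ : Fin m → V → V)
    (f : (Fin m → E) → E) (X : SigmaN σ → E) : SigmaN σ → E :=
  fun τ => f (fun j => X (σtilde σ j τ))

/-- For every cell `v`, evaluation at `v` is a graph fibration from the
fundamental network to the original network, and the corresponding pullback
conjugates the dynamics of the two networks. -/
theorem fundamental_fibration {V : Type*} {m : ℕ} (σ : Fin m → V → V) (v : V) :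
    (∀ (j : Fin m) (τ : SigmaN σ), σ j (τ.1 v) = (σtilde σ j τ).1 v) ∧
    (∀ (E : Type*) (f : (Fin m → E) → E) (x : V → E),
        γtilde σ f (fun τ : SigmaN σ => x (τ.1 v))
          = fun τ : SigmaN σ => networkMap σ f x (τ.1 v)) := by
  exact ⟨fun j τ => rfl, fun E f x => rfl⟩
end

section
/- Let σ : Fin m → (V → V) be the input maps of a homogeneous network, v : V, and suppose every cell of V is reachable from v, i.e. for every w : V there is τ ∈ Σ_N with τ v = w. Then the pullback φ_v* : (V → E) → (↥Σ_N → E), φ_v* x = x ∘ φ_v (where φ_v τ = τ v), is injective; its range equals the synchrony space Syn_{P(v)} = {X : ↥Σ_N → E | ∀ τ ρ : ↥Σ_N, τ v = ρ v → X τ = X ρ}; and Syn_{P(v)} is invariant under the fundamental network map γ̃[f] for every response function f : (Fin m → E) → E. -/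
/-- If every cell of `V` is reachable from `v` (i.e. `Σ_N` acts transitively
from `v`), then the pullback of the evaluation fibration `φ_v` is injective,
its range is the synchrony space `Syn_{P(v)}`, and this synchrony space is
invariant under every fundamental network map. -/
theorem input_network_embedding {V E : Type*} {m : ℕ} (σ : Fin m → V → V)
    (v : V) (hreach : ∀ w : V, ∃ τ ∈ SigmaN σ, τ v = w) :
    Function.Injective (fun x : V → E => fun τ : SigmaN σ => x (τ.1 v)) ∧
    Set.range (fun x : V → E => fun τ : SigmaN σ => x (τ.1 v)) =
      {X : SigmaN σ → E | ∀ τ ρ : SigmaN σ, τ.1 v = ρ.1 v → X τ = X ρ} ∧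
    (∀ f : (Fin m → E) → E,
      ∀ X ∈ {X : SigmaN σ → E | ∀ τ ρ : SigmaN σ, τ.1 v = ρ.1 v → X τ = X ρ},
        γtilde σ f X ∈
          {X : SigmaN σ → E | ∀ τ ρ : SigmaN σ, τ.1 v = ρ.1 v → X τ = X ρ}) := by
  classical
  refine ⟨?_, ?_, ?_⟩
  · intro x y h
    funext w
    obtain ⟨τ, hτ, hτv⟩ := hreach w
    have := congrFun h ⟨τ, hτ⟩
    simpa [hτv] using this
  · ext X
    constructor
    · rintro ⟨x, rfl⟩ τ ρ h
      simp [h]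
    · intro hX
      choose g hg hgv using hreach
      refine ⟨fun w => X ⟨g w, hg w⟩, ?_⟩
      funext τ
      exact hX _ _ (hgv _)
  · intro f X hX τ ρ h
    unfold γtilde
    congr 1
    funext j
    exact hX _ _ (by simp [σtilde, Function.End.mul_def, Function.comp, h]; exact congrArg (σ j) h)
end

section
/- Let σ : Fin m → (V → V) be the input maps of a homogeneous network and Σ_N the submonoid of Function.End V generated by {σ j | j : Fin m}. The left-regular representation Λ : ↥Σ_N →* Function.End ↥Σ_N, defined by Λ σ₀ τ = σ₀ * τ, is an injective monoid homomorphism, and its range equals the submonoid of Function.End ↥Σ_N generated by the input maps {σ̃ j | j : Fin m} of the fundamental network (where σ̃ j τ = σ j ∘ τ). In particular Σ_N is isomorphic as a monoid to the monoid Σ_{Ñ} generated by the input maps of the fundamental network, so the fundamental network of the fundamental network is isomorphic to the fundamental network itself. -/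
/-- The left-regular representation `Λ` of `Σ_N` on the cells of the
fundamental network (`Λ σ₀ τ = σ₀ * τ`) is an injective monoid homomorphism
whose range is the submonoid of `Function.End ↥Σ_N` generated by the input
maps `σ̃ j` of the fundamental network.  In particular `Σ_N` is isomorphic as
a monoid to the monoid generated by the input maps of the fundamental network,
so the fundamental network of the fundamental network is isomorphic to the
fundamental network itself. -/
theorem fundamental_of_fundamental {V : Type*} {m : ℕ} (σ : Fin m → V → V)
    (Λ : SigmaN σ →* Function.End (SigmaN σ))
    (hΛ : ∀ (σ₀ τ : SigmaN σ), Λ σ₀ τ = σ₀ * τ) :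
    Function.Injective Λ ∧
    MonoidHom.mrange Λ =
      Submonoid.closure
        (Set.range fun j : Fin m =>
          (show Function.End (SigmaN σ) from σtilde σ j)) ∧
    Nonempty
      (SigmaN σ ≃*
        Submonoid.closure
          (Set.range fun j : Fin m =>
            (show Function.End (SigmaN σ) from σtilde σ j))) := by

  have key : ∀ j : Fin m,
      (show Function.End (SigmaN σ) from σtilde σ j) = Λ ⟨σ j, sigma_mem_SigmaN σ j⟩ := by
    intro j
    funext τ
    rw [hΛ]
    rfl
  have hinj : Function.Injective Λ := by
    intro a b hab
    have : Λ a 1 = Λ b 1 := by rw [hab]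
    simpa [hΛ] using this
  have hrange : MonoidHom.mrange Λ =
      Submonoid.closure (Set.range fun j : Fin m =>
        (show Function.End (SigmaN σ) from σtilde σ j)) := by
    apply le_antisymm
    · rintro x ⟨s, rfl⟩
      have hs := s.2
      have : ∀ h : s.1 ∈ SigmaN σ, Λ ⟨s.1, h⟩ ∈
          Submonoid.closure (Set.range fun j : Fin m =>
            (show Function.End (SigmaN σ) from σtilde σ j)) := by
        refine Submonoid.closure_induction ?_ ?_ ?_ hs
        · rintro g ⟨j, rfl⟩ h
          rw [← key j]
          exact Submonoid.subset_closure ⟨j, rfl⟩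
        · intro h
          have : (⟨(1 : Function.End V), h⟩ : SigmaN σ) = 1 := rfl
          rw [this, map_one]
          exact one_mem _
        · intro a b ha hb iha ihb h
          have : (⟨a * b, h⟩ : SigmaN σ) = ⟨a, ha⟩ * ⟨b, hb⟩ := rfl
          rw [this, map_mul]
          exact mul_mem (iha ha) (ihb hb)
      simpa using this s.2
    · rw [Submonoid.closure_le]
      rintro x ⟨j, rfl⟩
      exact ⟨⟨σ j, sigma_mem_SigmaN σ j⟩, (key j).symm⟩
  exact ⟨hinj, hrange,
    ⟨(MulEquiv.ofBijective Λ.mrangeRestrict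
      ⟨fun a b h => hinj (by simpa [Subtype.ext_iff] using h),
        Λ.mrangeRestrict_surjective⟩).trans (MulEquiv.submonoidCongr hrange)⟩⟩
end

section
/- Let σ : Fin m → (V → V) be the input maps of a homogeneous network and Σ_N the submonoid of Function.End V generated by {σ j | j : Fin m}. For every ρ ∈ Σ_N, the right-multiplication map φ_ρ : ↥Σ_N → ↥Σ_N, φ_ρ τ = τ * ρ, commutes with every input map of the fundamental network: σ̃ j ∘ φ_ρ = φ_ρ ∘ σ̃ j for all j : Fin m (so φ_ρ is a self-fibration of the fundamental network). Consequently every fundamental network map is Σ_N-equivariant: for every type E, every response function f : (Fin m → E) → E, every X : ↥Σ_N → E and every ρ ∈ Σ_N, γ̃[f] (X ∘ φ_ρ) = (γ̃[f] X) ∘ φ_ρ. -/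
/-- For every `ρ ∈ Σ_N`, right multiplication `φ_ρ : τ ↦ τ * ρ` commutes with
all the input maps of the fundamental network (it is a self-fibration), and
consequently every fundamental network map is `Σ_N`-equivariant. -/
theorem fundamental_self_fibrations {V : Type*} {m : ℕ} (σ : Fin m → V → V)
    (ρ : SigmaN σ) :
    (∀ j : Fin m,
        (σtilde σ j) ∘ (fun τ : SigmaN σ => τ * ρ)
          = (fun τ : SigmaN σ => τ * ρ) ∘ (σtilde σ j)) ∧
    (∀ (E : Type*) (f : (Fin m → E) → E) (X : SigmaN σ → E),
        γtilde σ f (X ∘ fun τ : SigmaN σ => τ * ρ)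
          = (γtilde σ f X) ∘ fun τ : SigmaN σ => τ * ρ) := by
  constructor
  · intro j
    funext τ
    apply Subtype.ext
    exact (mul_assoc _ _ _).symm
  · intro E f X
    funext τ
    rfl
end

section
/- Let σ : Fin m → (V → V) be the input maps of a homogeneous network and Σ_N the submonoid of Function.End V generated by {σ j | j : Fin m}. Let ≈ be an equivalence relation on ↥Σ_N that is balanced for the fundamental network, i.e. for every j : Fin m and all τ ρ ∈ Σ_N, τ ≈ ρ implies σ̃ j τ ≈ σ̃ j ρ. Let E be a type and let γ : (↥Σ_N → E) → (↥Σ_N → E) be any Σ_N-equivariant map, i.e. for every ρ ∈ Σ_N and every X : ↥Σ_N → E, γ (fun τ => X (τ * ρ)) = fun τ => (γ X) (τ * ρ). Then γ maps the synchrony space Syn_≈ = {X : ↥Σ_N → E | ∀ τ ρ, τ ≈ ρ → X τ = X ρ} into itself. -/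
/-- Every balanced equivalence relation on the cells of the fundamental
network gives a synchrony space that is invariant under *every*
`Σ_N`-equivariant map (not just fundamental network maps). -/
theorem equivariant_preserves_balanced_synchrony {V E : Type*} {m : ℕ}
    (σ : Fin m → V → V)
    (r : SigmaN σ → SigmaN σ → Prop) (hr : Equivalence r)
    (hbal : ∀ (j : Fin m) (τ ρ : SigmaN σ), r τ ρ → r (σtilde σ j τ) (σtilde σ j ρ))
    (γ : (SigmaN σ → E) → (SigmaN σ → E))
    (heq : ∀ (ρ : SigmaN σ) (X : SigmaN σ → E),
        γ (fun τ => X (τ * ρ)) = fun τ => γ X (τ * ρ)) :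
    ∀ X : SigmaN σ → E, (∀ τ ρ : SigmaN σ, r τ ρ → X τ = X ρ) →
      ∀ τ ρ : SigmaN σ, r τ ρ → γ X τ = γ X ρ := by
  intro X hX τ ρ hτρ
  have key : ∀ (w : SigmaN σ) (τ ρ : SigmaN σ), r τ ρ → r (w * τ) (w * ρ) := by
    rintro ⟨w, hw⟩
    induction hw using Submonoid.closure_induction with
    | mem x hx =>
      obtain ⟨j, rfl⟩ := hx
      intro τ ρ h
      exact hbal j τ ρ h
    | one => intro τ ρ h; exact h
    | mul x y hx hy ihx ihy =>
      intro τ ρ h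
      have := ihx (⟨y, hy⟩ * τ) (⟨y, hy⟩ * ρ) (ihy τ ρ h)
      have hassoc : ∀ z : SigmaN σ, (⟨x, hx⟩ : SigmaN σ) * (⟨y, hy⟩ * z)
          = ⟨x * y, mul_mem hx hy⟩ * z := by
        intro z; exact (mul_assoc _ _ _).symm
      rwa [hassoc τ, hassoc ρ] at this
  have h1 : (fun τ' => X (τ' * τ)) = fun τ' => X (τ' * ρ) := by
    funext w
    exact hX _ _ (key w τ ρ hτρ)
  have h2 := congrFun (heq τ X) 1
  rw [h1, heq ρ X] at h2
  simpa using h2.symm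
end

section
/- Let σ : Fin m → (V → V) be the input maps of a homogeneous network, v : V a cell, Σ_N the submonoid of Function.End V generated by {σ j | j : Fin m}, and let ~ be a balanced equivalence relation on V (∀ j v₁ v₂, v₁ ~ v₂ → σ j v₁ ~ σ j v₂). Let E be a type and let γ : (↥Σ_N → E) → (↥Σ_N → E) be any Σ_N-equivariant map, i.e. for every ρ ∈ Σ_N and every X : ↥Σ_N → E, γ (fun τ => X (τ * ρ)) = fun τ => (γ X) (τ * ρ). Then γ maps the synchrony space {X : ↥Σ_N → E | ∀ τ ρ : ↥Σ_N, (τ : V → V) v ~ (ρ : V → V) v → X τ = X ρ} into itself. (Thus every robust synchrony of the original network, pulled back to the fundamental lift along evaluation at v, is an invariant subspace for arbitrary Σ_N-equivariant dynamics.) -/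
/-- Every robust synchrony of the original network (a balanced equivalence
relation `~` on `V`), pulled back to the fundamental lift along evaluation at
a cell `v`, is an invariant subspace for every `Σ_N`-equivariant map. -/
theorem equivariant_preserves_pulled_back_synchrony {V E : Type*} {m : ℕ}
    (σ : Fin m → V → V) (v : V)
    (r : V → V → Prop) (hr : Equivalence r)
    (hbal : ∀ (j : Fin m) (v₁ v₂ : V), r v₁ v₂ → r (σ j v₁) (σ j v₂))
    (γ : (SigmaN σ → E) → (SigmaN σ → E))
    (heq : ∀ (ρ : SigmaN σ) (X : SigmaN σ → E),
        γ (fun τ => X (τ * ρ)) = fun τ => γ X (τ * ρ)) :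
    ∀ X ∈ {X : SigmaN σ → E | ∀ τ ρ : SigmaN σ, r (τ.1 v) (ρ.1 v) → X τ = X ρ},
      γ X ∈ {X : SigmaN σ → E | ∀ τ ρ : SigmaN σ, r (τ.1 v) (ρ.1 v) → X τ = X ρ} := by
  intro X hX τ ρ hrv
  -- every element of Σ_N preserves r
  have hpres : ∀ g ∈ SigmaN σ, ∀ a b : V, r a b → r (g a) (g b) := by
    intro g hg
    induction hg using Submonoid.closure_induction with
    | mem x hx => obtain ⟨j, rfl⟩ := hx; exact fun a b h => hbal j a b h
    | one => exact fun a b h => h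
    | mul x y _ _ hx hy => exact fun a b h => hx _ _ (hy a b h)
  have hfun : (fun s : SigmaN σ => X (s * τ)) = (fun s => X (s * ρ)) := by
    funext s
    exact hX (s * τ) (s * ρ) (hpres s.1 s.2 _ _ hrv)
  have h1 := heq τ X
  have h2 := heq ρ X
  have := congrFun (h1.symm.trans (by rw [hfun, h2])) 1
  simpa using this
end

section
/- Let σ : Fin m → (V → V) be the input maps of a homogeneous network, S a set of cells of V, and φS : V → V an interior symmetry of S, i.e. φS v = v for v ∉ S, φS v ∈ S for v ∈ S, and φS (σ j v) = σ j (φS v) for all v ∈ S and all j : Fin m. Let r be the relation on V with r v w ↔ (v ∈ S ∧ w = φS v), and let ≈ be the equivalence closure (EqvGen) of r. Then ≈ is balanced: for every j : Fin m and all v w : V, v ≈ w implies σ j v ≈ σ j w. Consequently, for every type E and every response function f : (Fin m → E) → E, the network map γ[σ,f] preserves the synchrony space {x : V → E | ∀ v w, v ≈ w → x v = x w}; in particular it preserves {x : V → E | ∀ v ∈ S, x v = x (φS v)}, since this set contains that synchrony space and is generated by it. -/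
/-- Interior symmetry yields robust synchrony: if `φS` is an interior symmetry
of a set `S` of cells, then the equivalence closure `≈` of the relation
`r v w ↔ v ∈ S ∧ w = φS v` is balanced; consequently every network map
preserves the synchrony space of `≈`, and in particular also the set
`{x | ∀ v ∈ S, x v = x (φS v)}`. -/
theorem interior_symmetry_balanced {V : Type*} {m : ℕ} (σ : Fin m → V → V)
    (S : Set V) (φS : V → V)
    (h1 : ∀ v ∉ S, φS v = v)
    (h2 : ∀ v ∈ S, φS v ∈ S)
    (h3 : ∀ v ∈ S, ∀ j : Fin m, φS (σ j v) = σ j (φS v))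
    (r : V → V → Prop) (hrdef : ∀ v w, r v w ↔ (v ∈ S ∧ w = φS v)) :
    (∀ (j : Fin m) (v w : V),
        Relation.EqvGen r v w → Relation.EqvGen r (σ j v) (σ j w)) ∧
    (∀ (E : Type*) (f : (Fin m → E) → E),
      (∀ x ∈ {x : V → E | ∀ v w, Relation.EqvGen r v w → x v = x w},
        networkMap σ f x ∈
          {x : V → E | ∀ v w, Relation.EqvGen r v w → x v = x w}) ∧
      (∀ x ∈ {x : V → E | ∀ v ∈ S, x v = x (φS v)},
        networkMap σ f x ∈ {x : V → E | ∀ v ∈ S, x v = x (φS v)})) := by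
  have key : ∀ (j : Fin m) (v w : V),
      Relation.EqvGen r v w → Relation.EqvGen r (σ j v) (σ j w) := by
    intro j v w h
    induction h with
    | rel a b hab =>
        obtain ⟨haS, hb⟩ := (hrdef a b).mp hab
        subst hb
        by_cases hs : σ j a ∈ S
        · have : r (σ j a) (φS (σ j a)) := (hrdef _ _).mpr ⟨hs, rfl⟩
          rw [h3 a haS j] at this
          exact Relation.EqvGen.rel _ _ this
        · have := h1 _ hs
          rw [← h3 a haS j, this]
          exact Relation.EqvGen.refl _
    | refl a => exact Relation.EqvGen.refl _
    | symm a b _ ih => exact Relation.EqvGen.symm _ _ ih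
    | trans a b c _ _ ih1 ih2 => exact Relation.EqvGen.trans _ _ _ ih1 ih2
  refine ⟨key, fun E f => ⟨?_, ?_⟩⟩
  · intro x hx v w h
    exact congrArg f (funext fun j => hx _ _ (key j v w h))
  · intro x hx v hv
    refine congrArg f (funext fun j => ?_)
    by_cases hs : σ j v ∈ S
    · rw [hx _ hs, h3 v hv j]
    · rw [← h3 v hv j, h1 _ hs]
end

section
/- Let σ : Fin m → (V → V) be the input maps of a homogeneous network, S ⊆ V a set with decidable membership, and φS : V → V an interior symmetry of S (φS v = v for v ∉ S, φS v ∈ S for v ∈ S, and φS (σ j v) = σ j (φS v) for all v ∈ S and j). Define Φ : V ⊕ ↥S → V ⊕ ↥S by Φ (Sum.inl v) = Sum.inl v and Φ (Sum.inr ⟨s, hs⟩) = Sum.inr ⟨φS s, _⟩ (using φS s ∈ S). Then Φ is a self-fibration of the connected sum network: Φ (σ⊔ j x) = σ⊔ j (Φ x) for all j : Fin m and x : V ⊕ ↥S. -/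
/-- The input maps of the connected sum network `N ⊔_{∂S} N^S`, with cell set
`V ⊕ ↥S`. -/
def sigmaSum {V : Type*} {m : ℕ} (σ : Fin m → V → V) (S : Set V)
    [DecidablePred (· ∈ S)] (j : Fin m) : V ⊕ S → V ⊕ S
  | Sum.inl v => Sum.inl (σ j v)
  | Sum.inr s =>
      if h : σ j s.1 ∈ S then Sum.inr ⟨σ j s.1, h⟩ else Sum.inl (σ j s.1)

/-- An interior symmetry of `S` induces a self-fibration `Φ` of the connected
sum network: `Φ` commutes with all input maps of the connected sum. -/
theorem interior_symmetry_self_fibration {V : Type*} {m : ℕ}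
    (σ : Fin m → V → V) (S : Set V) [DecidablePred (· ∈ S)]
    (φS : V → V)
    (h1 : ∀ v ∉ S, φS v = v)
    (h2 : ∀ v ∈ S, φS v ∈ S)
    (h3 : ∀ v ∈ S, ∀ j : Fin m, φS (σ j v) = σ j (φS v))
    (Φ : V ⊕ S → V ⊕ S)
    (hΦl : ∀ v : V, Φ (Sum.inl v) = Sum.inl v)
    (hΦr : ∀ s : S, Φ (Sum.inr s) = Sum.inr ⟨φS s.1, h2 s.1 s.2⟩) :
    ∀ (j : Fin m) (x : V ⊕ S), Φ (sigmaSum σ S j x) = sigmaSum σ S j (Φ x) := by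
  intro j x
  cases x with
  | inl v => simp [sigmaSum, hΦl]
  | inr s =>
    obtain ⟨v, hv⟩ := s
    rw [hΦr]
    by_cases h : σ j v ∈ S
    · have h' : σ j (φS v) ∈ S := (h3 v hv j) ▸ h2 _ h
      simp only [sigmaSum, dif_pos h, dif_pos h', hΦr]
      exact congrArg Sum.inr (Subtype.ext (h3 v hv j))
    · have heq : σ j (φS v) = σ j v := by
        rw [← h3 v hv j, h1 _ h]
      have h' : ¬ σ j (φS v) ∈ S := heq ▸ h
      simp only [sigmaSum, dif_neg h, dif_neg h', hΦl, heq]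
end

section
/- Let V be a type, S ⊆ V a set, and φS : V → V a map with φS v ∈ S for every v ∈ S. On the connected-sum cell set V ⊕ ↥S, let K : V ⊕ ↥S → V ⊕ ↥S be the map K (Sum.inl v) = Sum.inl v, K (Sum.inr s) = Sum.inl s, and let Φ : V ⊕ ↥S → V ⊕ ↥S be Φ (Sum.inl v) = Sum.inl v, Φ (Sum.inr ⟨s, hs⟩) = Sum.inr ⟨φS s, _⟩. Then for every type E, the image under precomposition with Sum.inl of the intersection of fixed-point sets {X : (V ⊕ ↥S) → E | X ∘ K = X} ∩ {X | X ∘ Φ = X} equals the set {x : V → E | ∀ v ∈ S, x v = x (φS v)}. -/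
/-- The intersection of the fixed-point sets of the pullbacks of the fold map
`K` and of the interior symmetry `Φ` on the connected sum, restricted to the
original network via `Sum.inl`, is exactly the interior-symmetry synchrony
space `{x | ∀ v ∈ S, x v = x (φS v)}`. -/
theorem fixed_points_give_interior_synchrony {V E : Type*}
    (S : Set V) (φS : V → V) (h2 : ∀ v ∈ S, φS v ∈ S)
    (K : V ⊕ S → V ⊕ S)
    (hK1 : ∀ v : V, K (Sum.inl v) = Sum.inl v)
    (hK2 : ∀ s : S, K (Sum.inr s) = Sum.inl s.1)
    (Φ : V ⊕ S → V ⊕ S)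
    (hΦ1 : ∀ v : V, Φ (Sum.inl v) = Sum.inl v)
    (hΦ2 : ∀ s : S, Φ (Sum.inr s) = Sum.inr ⟨φS s.1, h2 s.1 s.2⟩) :
    (fun X : (V ⊕ S) → E => X ∘ Sum.inl) ''
        ({X : (V ⊕ S) → E | X ∘ K = X} ∩ {X : (V ⊕ S) → E | X ∘ Φ = X})
      = {x : V → E | ∀ v ∈ S, x v = x (φS v)} := by
  ext x
  constructor
  · rintro ⟨X, ⟨hXK, hXΦ⟩, rfl⟩ v hv
    have e1 : X (Sum.inl v) = X (Sum.inr ⟨v, hv⟩) := by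
      conv_rhs => rw [← hXK]
      simp [Function.comp, hK2]
    have e2 : X (Sum.inr ⟨v, hv⟩) = X (Sum.inr ⟨φS v, h2 v hv⟩) := by
      conv_lhs => rw [← hXΦ]
      simp [Function.comp, hΦ2 ⟨v, hv⟩]
    have e3 : X (Sum.inr ⟨φS v, h2 v hv⟩) = X (Sum.inl (φS v)) := by
      conv_lhs => rw [← hXK]
      simp [Function.comp, hK2 ⟨φS v, h2 v hv⟩]
    simp only [Function.comp]
    rw [e1, e2, e3]
  · intro hx
    refine ⟨Sum.elim x (fun s => x s.1), ⟨?_, ?_⟩, rfl⟩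
    · funext y
      cases y with
      | inl v => simp [Function.comp, hK1]
      | inr s => simp [Function.comp, hK2]
    · funext y
      cases y with
      | inl v => simp [Function.comp, hΦ1]
      | inr s => simp [Function.comp, hΦ2 s, (hx s.1 s.2).symm]
end

section
/- Let (C, V, E, m, σ) define a nonhomogeneous network structure with closed family Σ, and fix a colour c : C. For each colour d, let ≈_d be an equivalence relation on {g // g ∈ Σ c d} that is balanced for the extended family of fundamental input maps: whenever g ≈_d g', then for every colour e and every k ∈ Σ d e, (k ∘ g) ≈_e (k ∘ g'). Let (γ^b)_{b : C} be a family of maps γ^b : ((d : C) → {g // g ∈ Σ b d} → E d) → ((d : C) → {g // g ∈ Σ b d} → E d) that is Σ-equivariant: for all colours b b' : C and every h ∈ Σ b b', φ_h* ∘ γ^{b'} = γ^b ∘ φ_h*, where (φ_h* X) d g = X d ⟨g ∘ h, _⟩. Then γ^c maps the synchrony space {X : (d : C) → {g // g ∈ Σ c d} → E d | ∀ d, ∀ g g', g ≈_d g' → X d g = X d g'} into itself. -/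
/-- The network map of a nonhomogeneous network with cells `V c` of colour
`c`, state spaces `E c`, arities `m`, input maps `σ` and response functions
`f`. -/
def nhNetworkMap {C : Type*} {V E : C → Type*} {m : C → C → ℕ}
    (σ : ∀ d c : C, Fin (m d c) → (V c → V d))
    (f : ∀ c : C, ((d : C) → Fin (m d c) → E d) → E c)
    (x : (c : C) → V c → E c) : (c : C) → V c → E c :=
  fun c v => f c (fun d j => x d (σ d c j v))

/-- A closed family for a nonhomogeneous network: sets `Sig c d` of maps
`V c → V d` containing the identities and the input maps and closed under
composition.  This is the semigroupoid `Σ_N`. -/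
structure ClosedFamily {C : Type*} (V : C → Type*) {m : C → C → ℕ}
    (σ : ∀ d c : C, Fin (m d c) → (V c → V d)) where
  Sig : ∀ c d : C, Set (V c → V d)
  id_mem : ∀ c : C, id ∈ Sig c c
  sigma_mem : ∀ (d c : C) (j : Fin (m d c)), σ d c j ∈ Sig c d
  comp_mem : ∀ (c d e : C), ∀ g ∈ Sig c d, ∀ h ∈ Sig d e, h ∘ g ∈ Sig c e

/-- The `c`-th fundamental network map of a nonhomogeneous network: its cells
of colour `d` are the elements of `Σ c d`, and its input maps are given by
left composition with the original input maps. -/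
def nhFundMap {C : Type*} {V E : C → Type*} {m : C → C → ℕ}
    {σ : ∀ d c : C, Fin (m d c) → (V c → V d)}
    (Sg : ClosedFamily V σ)
    (f : ∀ c : C, ((d : C) → Fin (m d c) → E d) → E c) (c : C)
    (X : (d : C) → {g : V c → V d // g ∈ Sg.Sig c d} → E d) :
    (d : C) → {g : V c → V d // g ∈ Sg.Sig c d} → E d :=
  fun d g =>
    f d (fun e j =>
      X e ⟨σ e d j ∘ g.1, Sg.comp_mem c d e g.1 g.2 (σ e d j) (Sg.sigma_mem e d j)⟩)

/-- Synchrony from hidden semigroupoid symmetry for nonhomogeneous networks: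
if the equivalence relations `r d` on the cells of the `c`-th fundamental
network are balanced for the extended family of fundamental input maps, then
every `Σ`-equivariant family of maps `γfam` preserves the corresponding
synchrony space. -/
theorem nh_equivariant_preserves_synchrony {C : Type*} {V E : C → Type*}
    {m : C → C → ℕ}
    (σ : ∀ d c : C, Fin (m d c) → (V c → V d))
    (Sg : ClosedFamily V σ)
    (c : C)
    (r : ∀ d : C, {g : V c → V d // g ∈ Sg.Sig c d} →
      {g : V c → V d // g ∈ Sg.Sig c d} → Prop)
    (hr : ∀ d : C, Equivalence (r d))
    (hbal : ∀ (d : C) (g g' : {g : V c → V d // g ∈ Sg.Sig c d}), r d g g' →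
      ∀ (e : C) (k : V d → V e) (hk : k ∈ Sg.Sig d e),
        r e ⟨k ∘ g.1, Sg.comp_mem c d e g.1 g.2 k hk⟩
            ⟨k ∘ g'.1, Sg.comp_mem c d e g'.1 g'.2 k hk⟩)
    (γfam : ∀ b : C,
      ((d : C) → {g : V b → V d // g ∈ Sg.Sig b d} → E d) →
      ((d : C) → {g : V b → V d // g ∈ Sg.Sig b d} → E d))
    (heq : ∀ (b b' : C) (h : V b → V b') (hh : h ∈ Sg.Sig b b')
        (X : (d : C) → {g : V b → V d // g ∈ Sg.Sig b d} → E d),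
        γfam b' (fun d g => X d ⟨g.1 ∘ h, Sg.comp_mem b b' d h hh g.1 g.2⟩)
          = fun d g =>
              γfam b X d ⟨g.1 ∘ h, Sg.comp_mem b b' d h hh g.1 g.2⟩) :
    ∀ X : (d : C) → {g : V c → V d // g ∈ Sg.Sig c d} → E d,
      (∀ (d : C) (g g' : {g : V c → V d // g ∈ Sg.Sig c d}),
          r d g g' → X d g = X d g') →
      ∀ (d : C) (g g' : {g : V c → V d // g ∈ Sg.Sig c d}),
        r d g g' → γfam c X d g = γfam c X d g' := by
  intro X hX d g g' hgg
  have key : ∀ gg : {g : V c → V d // g ∈ Sg.Sig c d},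
      γfam c X d gg =
        γfam d (fun e k => X e ⟨k.1 ∘ gg.1, Sg.comp_mem c d e gg.1 gg.2 k.1 k.2⟩)
          d ⟨id, Sg.id_mem d⟩ := by
    intro gg
    have h1 := heq c d gg.1 gg.2 X
    have h2 := congrFun (congrFun h1 d) ⟨id, Sg.id_mem d⟩
    calc γfam c X d gg
        = γfam c X d ⟨id ∘ gg.1, Sg.comp_mem c d d gg.1 gg.2 id (Sg.id_mem d)⟩ := rfl
      _ = _ := h2.symm
  have hY : (fun (e : C) (k : {g : V d → V e // g ∈ Sg.Sig d e}) =>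
        X e ⟨k.1 ∘ g.1, Sg.comp_mem c d e g.1 g.2 k.1 k.2⟩)
      = fun e k => X e ⟨k.1 ∘ g'.1, Sg.comp_mem c d e g'.1 g'.2 k.1 k.2⟩ := by
    funext e k
    exact hX e _ _ (hbal d g g' hgg e k.1 k.2)
  rw [key g, key g', hY]
end

section
/- Let V be a type, σ : Fin m → (V → V) input maps of a homogeneous network, and ~ a balanced equivalence relation on V (for every j : Fin m and all v w, v ~ w implies σ j v ~ σ j w). Then for every type E and every response function f : (Fin m → E) → E, the network map γ[σ,f] preserves the synchrony space Syn(~, E): if x : V → E satisfies x v = x w for all v ~ w, then γ[σ,f] x v = γ[σ,f] x w for all v ~ w. Thus Syn(~, E) is a robust synchrony space: it is invariant under the network dynamics for every choice of state space and response function. -/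
/-- A balanced equivalence relation on the cells of a homogeneous network
yields a robust synchrony space: for every state space `E` and every response
function `f`, the network map preserves `Syn(~, E)`. -/
theorem balanced_gives_robust_synchrony {V : Type*} {m : ℕ}
    (σ : Fin m → V → V) (r : V → V → Prop) (hr : Equivalence r)
    (hbal : ∀ (j : Fin m) (v w : V), r v w → r (σ j v) (σ j w)) :
    ∀ (E : Type*) (f : (Fin m → E) → E) (x : V → E),
      (∀ v w : V, r v w → x v = x w) →
      ∀ v w : V, r v w → networkMap σ f x v = networkMap σ f x w := by
  intro E f x hx v w hvw
  simp only [networkMap]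
  congr 1
  funext j
  exact hx _ _ (hbal j v w hvw)
end
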